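/- Let (Ω, Σ, μ) be a measure space, ρ : Ω → (0,∞) measurable, and f, g, h : Ω → ℝ with all weighted products ρf², ρg², ρh², ρfg, ρfh, ρgh integrable, h ≠ 0 a.e. Let 0 < m < M and suppose the functions M·(g/h) − f/h and f/h − m·(g/h) are synchronous. Writing G(u,v) := (∫ρ u v dμ)·(∫ρ h² dμ) − (∫ρ u h dμ)·(∫ρ v h dμ) for the Gram-type determinant, one has 0 ≤ G(f,f)·G(g,g) − G(f,g)² ≤ (1/4)·(M − m)²·G(g,g)². -/
import Mathlib

open MeasureTheory

/-- The Gram-type determinant G(u,v) = (∫ρuv)(∫ρh²) − (∫ρuh)(∫ρvh). -/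
noncomputable def gramDet {Ω : Type*} [MeasurableSpace Ω] (μ : Measure Ω)
    (ρ h u v : Ω → ℝ) : ℝ :=
  (∫ x, ρ x * u x * v x ∂μ) * (∫ x, ρ x * h x ^ 2 ∂μ) -
    (∫ x, ρ x * u x * h x ∂μ) * (∫ x, ρ x * v x * h x ∂μ)

private lemma int_comb {Ω : Type*} [MeasurableSpace Ω] {μ : Measure Ω}
    {F1 F2 F3 F4 F5 F6 : Ω → ℝ} (c1 c2 c3 c4 c5 c6 : ℝ)
    (h1 : Integrable F1 μ) (h2 : Integrable F2 μ) (h3 : Integrable F3 μ)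
    (h4 : Integrable F4 μ) (h5 : Integrable F5 μ) (h6 : Integrable F6 μ) :
    ∫ x, (c1 * F1 x + c2 * F2 x + c3 * F3 x + c4 * F4 x + c5 * F5 x + c6 * F6 x) ∂μ =
      c1 * ∫ x, F1 x ∂μ + c2 * ∫ x, F2 x ∂μ + c3 * ∫ x, F3 x ∂μ +
        c4 * ∫ x, F4 x ∂μ + c5 * ∫ x, F5 x ∂μ + c6 * ∫ x, F6 x ∂μ := by
  have g1 : Integrable (fun x => c1 * F1 x) μ := h1.const_mul _
  have g2 : Integrable (fun x => c2 * F2 x) μ := h2.const_mul _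
  have g3 : Integrable (fun x => c3 * F3 x) μ := h3.const_mul _
  have g4 : Integrable (fun x => c4 * F4 x) μ := h4.const_mul _
  have g5 : Integrable (fun x => c5 * F5 x) μ := h5.const_mul _
  have g6 : Integrable (fun x => c6 * F6 x) μ := h6.const_mul _
  have g12 : Integrable (fun x => c1 * F1 x + c2 * F2 x) μ := g1.add g2
  have g13 : Integrable (fun x => c1 * F1 x + c2 * F2 x + c3 * F3 x) μ := g12.add g3
  have g14 : Integrable (fun x => c1 * F1 x + c2 * F2 x + c3 * F3 x + c4 * F4 x) μ := g13.add g4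
  have g15 : Integrable
      (fun x => c1 * F1 x + c2 * F2 x + c3 * F3 x + c4 * F4 x + c5 * F5 x) μ := g14.add g5
  rw [integral_add g15 g6, integral_add g14 g5, integral_add g13 g4, integral_add g12 g3,
    integral_add g1 g2, integral_const_mul, integral_const_mul, integral_const_mul,
    integral_const_mul, integral_const_mul, integral_const_mul]

set_option maxHeartbeats 2000000 in
theorem gram_reverse_cbs {Ω : Type*} [MeasurableSpace Ω]
    (μ : Measure Ω) [SigmaFinite μ] (ρ f g h : Ω → ℝ) (m M : ℝ)
    (hm : 0 < m) (hmM : m < M)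
    (hρm : Measurable ρ) (hρpos : ∀ x, 0 < ρ x)
    (hfm : Measurable f) (hgm : Measurable g) (hhm : Measurable h)
    (hne : ∀ᵐ x ∂μ, h x ≠ 0)
    (hf2 : Integrable (fun x => ρ x * f x ^ 2) μ)
    (hg2 : Integrable (fun x => ρ x * g x ^ 2) μ)
    (hh2 : Integrable (fun x => ρ x * h x ^ 2) μ)
    (hfg : Integrable (fun x => ρ x * f x * g x) μ)
    (hfh : Integrable (fun x => ρ x * f x * h x) μ)
    (hgh : Integrable (fun x => ρ x * g x * h x) μ)
    (hsync : ∀ᵐ p ∂(μ.prod μ),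
      0 ≤ ((M * (g p.1 / h p.1) - f p.1 / h p.1) -
            (M * (g p.2 / h p.2) - f p.2 / h p.2)) *
          ((f p.1 / h p.1 - m * (g p.1 / h p.1)) -
            (f p.2 / h p.2 - m * (g p.2 / h p.2)))) :
    0 ≤ gramDet μ ρ h f f * gramDet μ ρ h g g - gramDet μ ρ h f g ^ 2 ∧
      gramDet μ ρ h f f * gramDet μ ρ h g g - gramDet μ ρ h f g ^ 2 ≤
        (1 / 4) * (M - m) ^ 2 * gramDet μ ρ h g g ^ 2 := by
  have hff : Integrable (fun x => ρ x * f x * f x) μ := by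
    simpa [sq, mul_assoc] using hf2
  have hgg : Integrable (fun x => ρ x * g x * g x) μ := by
    simpa [sq, mul_assoc] using hg2
  set A := ∫ x, ρ x * f x * f x ∂μ with hA
  set B := ∫ x, ρ x * g x * g x ∂μ with hB
  set c := ∫ x, ρ x * h x ^ 2 ∂μ with hc
  set C := ∫ x, ρ x * f x * g x ∂μ with hC
  set a := ∫ x, ρ x * f x * h x ∂μ with ha
  set b := ∫ x, ρ x * g x * h x ∂μ with hb
  -- the two-parameter quadratic form is nonnegative
  have key : ∀ t s : ℝ,
      0 ≤ A + t ^ 2 * B + s ^ 2 * c + 2 * t * C + 2 * s * a + 2 * (t * s) * b := by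
    intro t s
    have hnn : 0 ≤ ∫ x, ρ x * (f x + t * g x + s * h x) ^ 2 ∂μ :=
      integral_nonneg fun x => mul_nonneg (hρpos x).le (sq_nonneg _)
    have hexp : (fun x => ρ x * (f x + t * g x + s * h x) ^ 2) =
        fun x => 1 * (ρ x * f x * f x) + t ^ 2 * (ρ x * g x * g x) +
          s ^ 2 * (ρ x * h x ^ 2) + (2 * t) * (ρ x * f x * g x) +
          (2 * s) * (ρ x * f x * h x) + (2 * (t * s)) * (ρ x * g x * h x) := by
      funext x; ring
    rw [hexp, int_comb 1 (t ^ 2) (s ^ 2) (2 * t) (2 * s) (2 * (t * s))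
      hff hgg hh2 hfg hfh hgh] at hnn
    linarith [hnn]
  have q1 : ∀ t : ℝ, 0 ≤ (B * c - b ^ 2) * (t * t) + 2 * (C * c - a * b) * t
      + (A * c - a ^ 2) := by
    intro t
    have hd : discrim c (2 * (a + t * b)) (A + t ^ 2 * B + 2 * t * C) ≤ 0 := by
      apply discrim_le_zero
      intro s
      nlinarith [key t s]
    rw [discrim] at hd
    nlinarith [hd]
  have hcbs : (C * c - a * b) ^ 2 ≤ (A * c - a ^ 2) * (B * c - b ^ 2) := by
    have hd : discrim (B * c - b ^ 2) (2 * (C * c - a * b)) (A * c - a ^ 2) ≤ 0 :=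
      discrim_le_zero q1
    rw [discrim] at hd; nlinarith [hd]
  have hPnn : 0 ≤ A * c - a ^ 2 := by nlinarith [q1 0]
  have hQnn : 0 ≤ B * c - b ^ 2 := by
    have keyg : ∀ s : ℝ, 0 ≤ c * (s * s) + 2 * b * s + B := by
      intro s
      have hnn : 0 ≤ ∫ x, ρ x * (g x + s * h x) ^ 2 ∂μ :=
        integral_nonneg fun x => mul_nonneg (hρpos x).le (sq_nonneg _)
      have hexp : (fun x => ρ x * (g x + s * h x) ^ 2) =
          fun x => 0 * (ρ x * f x * f x) + 1 * (ρ x * g x * g x) +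
            s ^ 2 * (ρ x * h x ^ 2) + 0 * (ρ x * f x * g x) +
            0 * (ρ x * f x * h x) + (2 * s) * (ρ x * g x * h x) := by
        funext x; ring
      rw [hexp, int_comb 0 1 (s ^ 2) 0 0 (2 * s) hff hgg hh2 hfg hfh hgh] at hnn
      nlinarith [hnn]
    have hd : discrim c (2 * b) B ≤ 0 := discrim_le_zero keyg
    rw [discrim] at hd; nlinarith [hd]
  -- the synchronicity constraint
  have star : (A * c - a ^ 2) + m * M * (B * c - b ^ 2) ≤
      (M + m) * (C * c - a * b) := by
    have hαi : Integrable (fun x => ρ x * ((M * g x - f x) * (f x - m * g x))) μ := by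
      have : (fun x => ρ x * ((M * g x - f x) * (f x - m * g x))) =
          fun x => (M + m) * (ρ x * f x * g x) - ρ x * f x * f x -
            m * M * (ρ x * g x * g x) := by funext x; ring
      rw [this]
      exact ((hfg.const_mul _).sub hff).sub (hgg.const_mul _)
    have hβi : Integrable (fun x => ρ x * h x * (M * g x - f x)) μ := by
      have : (fun x => ρ x * h x * (M * g x - f x)) =
          fun x => M * (ρ x * g x * h x) - ρ x * f x * h x := by funext x; ring
      rw [this]; exact (hgh.const_mul _).sub hfh
    have hγi : Integrable (fun x => ρ x * h x * (f x - m * g x)) μ := by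
      have : (fun x => ρ x * h x * (f x - m * g x)) =
          fun x => ρ x * f x * h x - m * (ρ x * g x * h x) := by funext x; ring
      rw [this]; exact hfh.sub (hgh.const_mul _)
    have p1 : Integrable (fun z : Ω × Ω =>
        (ρ z.1 * ((M * g z.1 - f z.1) * (f z.1 - m * g z.1))) * (ρ z.2 * h z.2 ^ 2))
        (μ.prod μ) := hαi.mul_prod hh2
    have p2 : Integrable (fun z : Ω × Ω =>
        (ρ z.1 * h z.1 ^ 2) * (ρ z.2 * ((M * g z.2 - f z.2) * (f z.2 - m * g z.2))))
        (μ.prod μ) := hh2.mul_prod hαi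
    have p3 : Integrable (fun z : Ω × Ω =>
        (ρ z.1 * h z.1 * (M * g z.1 - f z.1)) * (ρ z.2 * h z.2 * (f z.2 - m * g z.2)))
        (μ.prod μ) := hβi.mul_prod hγi
    have p4 : Integrable (fun z : Ω × Ω =>
        (ρ z.1 * h z.1 * (f z.1 - m * g z.1)) * (ρ z.2 * h z.2 * (M * g z.2 - f z.2)))
        (μ.prod μ) := hγi.mul_prod hβi
    have p12 : Integrable (fun z : Ω × Ω =>
        (ρ z.1 * ((M * g z.1 - f z.1) * (f z.1 - m * g z.1))) * (ρ z.2 * h z.2 ^ 2) +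
        (ρ z.1 * h z.1 ^ 2) * (ρ z.2 * ((M * g z.2 - f z.2) * (f z.2 - m * g z.2))))
        (μ.prod μ) := p1.add p2
    have p123 : Integrable (fun z : Ω × Ω =>
        (ρ z.1 * ((M * g z.1 - f z.1) * (f z.1 - m * g z.1))) * (ρ z.2 * h z.2 ^ 2) +
        (ρ z.1 * h z.1 ^ 2) * (ρ z.2 * ((M * g z.2 - f z.2) * (f z.2 - m * g z.2))) -
        (ρ z.1 * h z.1 * (M * g z.1 - f z.1)) * (ρ z.2 * h z.2 * (f z.2 - m * g z.2)))
        (μ.prod μ) := p12.sub p3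
    have hne2 : ∀ᵐ z ∂(μ.prod μ), h z.1 ≠ 0 ∧ h z.2 ≠ 0 :=
      (Measure.quasiMeasurePreserving_fst.ae hne).and
        (Measure.quasiMeasurePreserving_snd.ae hne)
    have hΦnn : 0 ≤ ∫ z : Ω × Ω,
        ((ρ z.1 * ((M * g z.1 - f z.1) * (f z.1 - m * g z.1))) * (ρ z.2 * h z.2 ^ 2) +
        (ρ z.1 * h z.1 ^ 2) * (ρ z.2 * ((M * g z.2 - f z.2) * (f z.2 - m * g z.2))) -
        (ρ z.1 * h z.1 * (M * g z.1 - f z.1)) * (ρ z.2 * h z.2 * (f z.2 - m * g z.2)) -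
        (ρ z.1 * h z.1 * (f z.1 - m * g z.1)) * (ρ z.2 * h z.2 * (M * g z.2 - f z.2)))
          ∂(μ.prod μ) := by
      apply integral_nonneg_of_ae
      filter_upwards [hsync, hne2] with z hz hzne
      obtain ⟨h1, h2⟩ := hzne
      have hw : 0 ≤ (ρ z.1 * h z.1 ^ 2) * (ρ z.2 * h z.2 ^ 2) :=
        mul_nonneg (mul_nonneg (hρpos _).le (sq_nonneg _))
          (mul_nonneg (hρpos _).le (sq_nonneg _))
      have := mul_nonneg hw hz
      calc (0 : ℝ) ≤ (ρ z.1 * h z.1 ^ 2) * (ρ z.2 * h z.2 ^ 2) *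
            (((M * (g z.1 / h z.1) - f z.1 / h z.1) -
              (M * (g z.2 / h z.2) - f z.2 / h z.2)) *
            ((f z.1 / h z.1 - m * (g z.1 / h z.1)) -
              (f z.2 / h z.2 - m * (g z.2 / h z.2)))) := this
        _ = _ := by field_simp; ring
    have hsplit : (∫ z : Ω × Ω,
        ((ρ z.1 * ((M * g z.1 - f z.1) * (f z.1 - m * g z.1))) * (ρ z.2 * h z.2 ^ 2) +
        (ρ z.1 * h z.1 ^ 2) * (ρ z.2 * ((M * g z.2 - f z.2) * (f z.2 - m * g z.2))) -
        (ρ z.1 * h z.1 * (M * g z.1 - f z.1)) * (ρ z.2 * h z.2 * (f z.2 - m * g z.2)) -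
        (ρ z.1 * h z.1 * (f z.1 - m * g z.1)) * (ρ z.2 * h z.2 * (M * g z.2 - f z.2)))
          ∂(μ.prod μ)) =
        (∫ x, ρ x * ((M * g x - f x) * (f x - m * g x)) ∂μ) * c +
          c * (∫ x, ρ x * ((M * g x - f x) * (f x - m * g x)) ∂μ) -
          (∫ x, ρ x * h x * (M * g x - f x) ∂μ) *
            (∫ x, ρ x * h x * (f x - m * g x) ∂μ) -
          (∫ x, ρ x * h x * (f x - m * g x) ∂μ) *
            (∫ x, ρ x * h x * (M * g x - f x) ∂μ) := by
      rw [integral_sub p123 p4, integral_sub p12 p3, integral_add p1 p2,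
        integral_prod_mul (fun x => ρ x * ((M * g x - f x) * (f x - m * g x)))
          (fun x => ρ x * h x ^ 2),
        integral_prod_mul (fun x => ρ x * h x ^ 2)
          (fun x => ρ x * ((M * g x - f x) * (f x - m * g x))),
        integral_prod_mul (fun x => ρ x * h x * (M * g x - f x))
          (fun x => ρ x * h x * (f x - m * g x)),
        integral_prod_mul (fun x => ρ x * h x * (f x - m * g x))
          (fun x => ρ x * h x * (M * g x - f x))]
    have hIα : ∫ x, ρ x * ((M * g x - f x) * (f x - m * g x)) ∂μ =
        (M + m) * C - A - m * M * B := by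
      have hexp : (fun x => ρ x * ((M * g x - f x) * (f x - m * g x))) =
          fun x => (-1) * (ρ x * f x * f x) + (-(m * M)) * (ρ x * g x * g x) +
            0 * (ρ x * h x ^ 2) + (M + m) * (ρ x * f x * g x) +
            0 * (ρ x * f x * h x) + 0 * (ρ x * g x * h x) := by funext x; ring
      rw [hexp, int_comb (-1) (-(m * M)) 0 (M + m) 0 0 hff hgg hh2 hfg hfh hgh]
      ring
    have hIβ : ∫ x, ρ x * h x * (M * g x - f x) ∂μ = M * b - a := by
      have hexp : (fun x => ρ x * h x * (M * g x - f x)) =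
          fun x => 0 * (ρ x * f x * f x) + 0 * (ρ x * g x * g x) +
            0 * (ρ x * h x ^ 2) + 0 * (ρ x * f x * g x) +
            (-1) * (ρ x * f x * h x) + M * (ρ x * g x * h x) := by funext x; ring
      rw [hexp, int_comb 0 0 0 0 (-1) M hff hgg hh2 hfg hfh hgh]
      ring
    have hIγ : ∫ x, ρ x * h x * (f x - m * g x) ∂μ = a - m * b := by
      have hexp : (fun x => ρ x * h x * (f x - m * g x)) =
          fun x => 0 * (ρ x * f x * f x) + 0 * (ρ x * g x * g x) +
            0 * (ρ x * h x ^ 2) + 0 * (ρ x * f x * g x) +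
            1 * (ρ x * f x * h x) + (-m) * (ρ x * g x * h x) := by funext x; ring
      rw [hexp, int_comb 0 0 0 0 1 (-m) hff hgg hh2 hfg hfh hgh]
      ring
    rw [hsplit, hIα, hIβ, hIγ] at hΦnn
    nlinarith [hΦnn]
  clear_value A B c C a b
  -- conclusion
  have hgoal1 : gramDet μ ρ h f f * gramDet μ ρ h g g - gramDet μ ρ h f g ^ 2 =
      (A * c - a ^ 2) * (B * c - b ^ 2) - (C * c - a * b) ^ 2 := by
    simp only [gramDet, ← hA, ← hB, ← hc, ← hC, ← ha, ← hb]; ring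
  have hgoal2 : gramDet μ ρ h g g = B * c - b ^ 2 := by
    simp only [gramDet, ← hB, ← hc, ← hb]; ring
  rw [hgoal1, hgoal2]
  set P := A * c - a ^ 2 with hPd
  set Q := B * c - b ^ 2 with hQd
  set R := C * c - a * b with hRd
  clear_value P Q R
  clear hA hB hc hC ha hb hPd hQd hRd key q1 hsync hne hf2 hg2 hh2 hfg hfh hgh hff hgg
  constructor
  · linarith [hcbs]
  · have h1 : P * Q ≤ ((M + m) * R - m * M * Q) * Q :=
      mul_le_mul_of_nonneg_right (by linarith) hQnn
    nlinarith [sq_nonneg (2 * R - (M + m) * Q), h1]
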